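/- For every real a > 2, the integrals ∫₀^∞ (K₃(s) − K₂(s)/s) s^a ds and ∫₀^∞ (K₂(s)/s) s^a ds are finite and their ratio equals a + 1: (∫₀^∞ (K₃(s) − K₂(s)/s) s^a ds) / (∫₀^∞ (K₂(s)/s) s^a ds) = a + 1. -/

import Mathlib

open MeasureTheory Real Filter Set

/-- Modified Bessel function of the second kind, integral representation. -/
noncomputable def besselK (n : ℕ) (x : ℝ) : ℝ :=
  ∫ t in Set.Ioi (0 : ℝ), Real.exp (-x * Real.cosh t) * Real.cosh (n * t)

/-- Dimensionless energy-to-pressure ratio `r(γ, a) = e/p` of a relativistic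
gas with internal structure, state-density measure `φ(I) = I^a`. -/
noncomputable def rRatio (γ a : ℝ) : ℝ :=
  (∫ s in Set.Ioi γ, (besselK 3 s - besselK 2 s / s) * (s - γ) ^ a) /
  (∫ s in Set.Ioi γ, (besselK 2 s / s) * (s - γ) ^ a)

open Topology


lemma exp_le_two_cosh (t : ℝ) : Real.exp t ≤ 2 * Real.cosh t := by
  rw [Real.cosh_eq]; have := (Real.exp_pos (-t)).le; linarith

lemma cosh_le_exp_self {t : ℝ} (ht : 0 ≤ t) : Real.cosh t ≤ Real.exp t := by
  rw [Real.cosh_eq]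
  have h1 : Real.exp (-t) ≤ Real.exp t := Real.exp_le_exp.2 (by linarith)
  linarith

lemma contA (n b : ℝ) : Continuous (fun t : ℝ => Real.cosh (n * t) * (1 / Real.cosh t) ^ b) := by
  apply (Real.continuous_cosh.comp (continuous_const.mul continuous_id)).mul
  apply (continuous_const.div Real.continuous_cosh (fun t => (Real.cosh_pos t).ne')).rpow_const
  intro t; exact Or.inl (one_div_ne_zero (Real.cosh_pos t).ne')

/-- integrability of `cosh (n t) * (1 / cosh t) ^ b` on `(0, ∞)` for `0 ≤ n < b`. -/
lemma intA {n b : ℝ} (hn : 0 ≤ n) (hnb : n < b) :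
    IntegrableOn (fun t => Real.cosh (n * t) * (1 / Real.cosh t) ^ b) (Set.Ioi (0:ℝ)) := by
  have hb : 0 < b := lt_of_le_of_lt hn hnb
  apply Integrable.mono' (g := fun t : ℝ => (2:ℝ) ^ b * Real.exp ((n - b) * t))
  · apply Integrable.const_mul
    have := exp_neg_integrableOn_Ioi (0:ℝ) (b := b - n) (by linarith)
    apply this.congr_fun ?_ measurableSet_Ioi
    intro t _; ring_nf
  · exact (contA n b).aestronglyMeasurable.restrict
  · filter_upwards [ae_restrict_mem measurableSet_Ioi] with t ht
    have ht0 : (0:ℝ) ≤ t := le_of_lt ht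
    have hch : (0:ℝ) < Real.cosh t := Real.cosh_pos t
    have hnn : (0:ℝ) ≤ Real.cosh (n * t) * (1 / Real.cosh t) ^ b := by positivity
    rw [Real.norm_eq_abs, abs_of_nonneg hnn]
    have h1 : Real.cosh (n * t) ≤ Real.exp (n * t) := cosh_le_exp_self (by positivity)
    have h2 : (1 / Real.cosh t) ^ b ≤ (2 * Real.exp (-t)) ^ b := by
      apply Real.rpow_le_rpow (by positivity) ?_ hb.le
      rw [div_le_iff₀ hch]
      have he : Real.exp (-t) * Real.exp t = 1 := by rw [← Real.exp_add]; simp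
      nlinarith [exp_le_two_cosh t, (Real.exp_pos (-t)).le, hch.le]
    calc Real.cosh (n * t) * (1 / Real.cosh t) ^ b
        ≤ Real.exp (n * t) * (2 * Real.exp (-t)) ^ b := by
          apply mul_le_mul h1 h2 (by positivity) (by positivity)
      _ = (2:ℝ) ^ b * Real.exp ((n - b) * t) := by
          rw [Real.mul_rpow (by norm_num) (Real.exp_pos _).le, ← Real.exp_mul,
            mul_comm (rexp (n*t)), mul_assoc, ← Real.exp_add,
            show -t * b + n * t = (n - b) * t by ring]

/-- the Bessel integrand is integrable in `t` for fixed `s > 0`. -/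
lemma intB (m : ℕ) {s : ℝ} (hs : 0 < s) :
    IntegrableOn (fun t => Real.exp (-s * Real.cosh t) * Real.cosh ((m:ℝ) * t))
      (Set.Ioi (0:ℝ)) := by
  have key := intA (n := (m:ℝ)) (b := (m:ℝ)+1) (Nat.cast_nonneg m) (by linarith)
  apply Integrable.mono' (key.const_mul (((m+1).factorial : ℝ) / s^(m+1)))
  · apply Continuous.aestronglyMeasurable
    exact ((Real.continuous_exp.comp (continuous_const.mul Real.continuous_cosh)).mul
      (Real.continuous_cosh.comp (continuous_const.mul continuous_id)))
  · filter_upwards [ae_restrict_mem measurableSet_Ioi] with t ht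
    have hc : (0:ℝ) < Real.cosh t := Real.cosh_pos t
    have hx : (0:ℝ) < s * Real.cosh t := by positivity
    have hnn : (0:ℝ) ≤ Real.exp (-s * Real.cosh t) * Real.cosh ((m:ℝ) * t) := by positivity
    rw [Real.norm_eq_abs, abs_of_nonneg hnn]
    have hp : (s * Real.cosh t) ^ (m+1) / (m+1).factorial ≤ Real.exp (s * Real.cosh t) :=
      Real.pow_div_factorial_le_exp _ hx.le (m+1)
    have hB : Real.exp (-(s * Real.cosh t)) ≤ ((m+1).factorial : ℝ) / (s * Real.cosh t) ^ (m+1) := by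
      rw [le_div_iff₀ (by positivity), Real.exp_neg]
      rw [div_le_iff₀ (by positivity : (0:ℝ) < ((m+1).factorial : ℝ))] at hp
      rw [inv_mul_le_iff₀ (Real.exp_pos _)]
      exact hp
    have hrpow : ((1:ℝ) / Real.cosh t) ^ ((m:ℝ)+1) = (1 / Real.cosh t) ^ (m+1 : ℕ) := by
      rw [← Real.rpow_natCast (1 / Real.cosh t) (m+1)]
      push_cast; ring_nf
    calc Real.exp (-s * Real.cosh t) * Real.cosh ((m:ℝ) * t)
        ≤ (((m+1).factorial : ℝ) / (s * Real.cosh t) ^ (m+1)) * Real.cosh ((m:ℝ) * t) := by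
          apply mul_le_mul_of_nonneg_right ?_ (by positivity)
          rw [neg_mul]; exact hB
      _ = (((m+1).factorial : ℝ) / s^(m+1)) * (Real.cosh ((m:ℝ)*t) * (1 / Real.cosh t) ^ ((m:ℝ)+1)) := by
          rw [hrpow]
          ring

lemma intGamma {b c : ℝ} (hb : 0 < b) (hc : 0 < c) :
    IntegrableOn (fun s : ℝ => Real.exp (-(c * s)) * s ^ b) (Set.Ioi (0:ℝ)) := by
  have h0 : IntegrableOn (fun x : ℝ => Real.exp (-x) * x ^ b) (Set.Ioi (0:ℝ)) := by
    have := Real.GammaIntegral_convergent (s := b+1) (by linarith)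
    simpa using this
  have h1 : IntegrableOn (fun x : ℝ => Real.exp (-(c*x)) * (c*x) ^ b) (Set.Ioi (0:ℝ)) := by
    have h2 := (integrableOn_Ioi_comp_mul_left_iff (fun x : ℝ => Real.exp (-x) * x ^ b) 0 hc).2
    rw [mul_zero] at h2
    exact h2 h0
  apply IntegrableOn.congr_fun (h1.const_mul ((c ^ b)⁻¹)) ?_ measurableSet_Ioi
  intro x hx
  have hx0 : (0:ℝ) < x := hx
  dsimp only
  rw [Real.mul_rpow hc.le hx0.le]
  have : (0:ℝ) < c ^ b := Real.rpow_pos_of_pos hc b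
  field_simp

lemma besselK_moment (n : ℕ) {b : ℝ} (hb : 0 < b) (hnb : (n:ℝ) < b + 1) :
    IntegrableOn (fun s => besselK n s * s ^ b) (Set.Ioi (0:ℝ)) ∧
    ∫ s in Set.Ioi (0:ℝ), besselK n s * s ^ b
      = Real.Gamma (b+1) *
        ∫ t in Set.Ioi (0:ℝ), Real.cosh ((n:ℝ) * t) * (1/Real.cosh t) ^ (b+1) := by
  set μ := volume.restrict (Set.Ioi (0:ℝ)) with hμ
  set f : ℝ → ℝ → ℝ :=
    fun t s => Real.exp (-s * Real.cosh t) * Real.cosh ((n:ℝ) * t) * s ^ b with hf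
  have hb1 : (0:ℝ) < b + 1 := by linarith
  -- measurability
  have hmeas : AEStronglyMeasurable (Function.uncurry f) (μ.prod μ) := by
    apply Continuous.aestronglyMeasurable
    apply Continuous.mul
    · apply Continuous.mul
      · exact Real.continuous_exp.comp
          ((continuous_snd.neg).mul (Real.continuous_cosh.comp continuous_fst))
      · exact Real.continuous_cosh.comp (continuous_const.mul continuous_fst)
    · exact continuous_snd.rpow_const (fun p => Or.inr hb.le)
  -- sections in s
  have hsec : ∀ t : ℝ, Integrable (f t) μ := by
    intro t
    have hc := Real.cosh_pos t
    apply IntegrableOn.congr_fun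
      ((intGamma hb hc).const_mul (Real.cosh ((n:ℝ)*t))) ?_ measurableSet_Ioi
    intro s _
    simp only [hf]
    rw [show -(Real.cosh t * s) = -s * Real.cosh t by ring]
    ring
  -- value of inner s-integral
  have inner : ∀ t : ℝ, ∫ s, f t s ∂μ
      = Real.Gamma (b+1) * (Real.cosh ((n:ℝ)*t) * (1/Real.cosh t) ^ (b+1)) := by
    intro t
    have hc := Real.cosh_pos t
    have h1 : ∫ s, f t s ∂μ
        = ∫ s in Set.Ioi (0:ℝ), Real.cosh ((n:ℝ)*t) * (s ^ ((b+1)-1) * Real.exp (-(Real.cosh t * s))) := by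
      apply setIntegral_congr_fun measurableSet_Ioi
      intro s _
      simp only [hf]
      rw [show -(Real.cosh t * s) = -s * Real.cosh t by ring,
        show b + 1 - 1 = b by ring]
      ring
    rw [h1, integral_const_mul, integral_rpow_mul_exp_neg_mul_Ioi hb1 hc]
    ring
  have innern : ∀ t : ℝ, ∫ s, ‖f t s‖ ∂μ
      = Real.Gamma (b+1) * (Real.cosh ((n:ℝ)*t) * (1/Real.cosh t) ^ (b+1)) := by
    intro t
    rw [← inner t]
    apply setIntegral_congr_fun measurableSet_Ioi
    intro s hs
    have hs0 : (0:ℝ) < s := hs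
    have hc := Real.cosh_pos t
    have hcn := Real.cosh_pos ((n:ℝ)*t)
    have hnn : (0:ℝ) ≤ f t s := by
      simp only [hf]; positivity
    dsimp only
    rw [Real.norm_eq_abs, abs_of_nonneg hnn]
  -- integrability of the norm integral
  have hint : Integrable (fun t => ∫ s, ‖f t s‖ ∂μ) μ := by
    apply IntegrableOn.congr_fun
      ((intA (Nat.cast_nonneg n) hnb).const_mul (Real.Gamma (b+1))) ?_ measurableSet_Ioi
    intro t _
    exact (innern t).symm
  have hprod : Integrable (Function.uncurry f) (μ.prod μ) :=
    (integrable_prod_iff hmeas).2 ⟨Filter.Eventually.of_forall hsec, hint⟩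
  -- integrability in s of besselK n s * s ^ b
  have hswap : Integrable (fun p : ℝ × ℝ => f p.2 p.1) (μ.prod μ) := hprod.swap
  have hK : Integrable (fun s => ∫ t, f t s ∂μ) μ := hswap.integral_prod_left
  have hBid : (fun s => ∫ t, f t s ∂μ) = fun s => besselK n s * s ^ b := by
    funext s
    rw [besselK]
    exact integral_mul_const _ _
  constructor
  · rw [← hBid]; exact hK
  · calc ∫ s in Set.Ioi (0:ℝ), besselK n s * s ^ b
        = ∫ s, (∫ t, f t s ∂μ) ∂μ := by rw [hBid]
      _ = ∫ t, (∫ s, f t s ∂μ) ∂μ := (integral_integral_swap hprod).symm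
      _ = ∫ t in Set.Ioi (0:ℝ),
            Real.Gamma (b+1) * (Real.cosh ((n:ℝ)*t) * (1/Real.cosh t) ^ (b+1)) := by
          apply setIntegral_congr_fun measurableSet_Ioi
          intro t _
          exact inner t
      _ = Real.Gamma (b+1) *
            ∫ t in Set.Ioi (0:ℝ), Real.cosh ((n:ℝ) * t) * (1/Real.cosh t) ^ (b+1) :=
          integral_const_mul _ _

lemma key_ident {a : ℝ} (ha : 2 < a) :
    a * ∫ t in Set.Ioi (0:ℝ), Real.cosh (3*t) * (1/Real.cosh t) ^ (a+1)
      = (a+2) * ∫ t in Set.Ioi (0:ℝ), Real.cosh (2*t) * (1/Real.cosh t) ^ a := by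
  set F' : ℝ → ℝ := fun t => a * (Real.cosh (3*t) * (1/Real.cosh t) ^ (a+1))
      - (a+2) * (Real.cosh (2*t) * (1/Real.cosh t) ^ a) with hF'
  set g : ℝ → ℝ := fun t => -2 * (Real.sinh t * Real.cosh t ^ (1-a)) with hg
  have hf3 := intA (n := (3:ℝ)) (b := a+1) (by norm_num) (by linarith)
  have hf2 := intA (n := (2:ℝ)) (b := a) (by norm_num) (by linarith)
  have hFint : IntegrableOn F' (Set.Ioi (0:ℝ)) := (hf3.const_mul a).sub (hf2.const_mul (a+2))
  have hderiv : ∀ x ∈ Set.Ici (0:ℝ), HasDerivAt g (F' x) x := by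
    intro x _
    have hc : (0:ℝ) < Real.cosh x := Real.cosh_pos x
    have h1 : HasDerivAt (fun t => Real.cosh t ^ (1-a))
        (Real.sinh x * (1-a) * Real.cosh x ^ (1-a-1)) x :=
      (Real.hasDerivAt_cosh x).rpow_const (Or.inl hc.ne')
    have h2 : HasDerivAt (fun t => Real.sinh t * Real.cosh t ^ (1-a))
        (Real.cosh x * Real.cosh x ^ (1-a)
          + Real.sinh x * (Real.sinh x * (1-a) * Real.cosh x ^ (1-a-1))) x :=
      (Real.hasDerivAt_sinh x).mul h1
    have h3 := h2.const_mul (-2 : ℝ)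
    refine h3.congr_deriv ?_
    symm
    -- algebra: F' x equals the computed derivative
    have hw : (0:ℝ) < Real.cosh x ^ a := Real.rpow_pos_of_pos hc a
    have e1 : Real.cosh x ^ (1-a) = Real.cosh x / Real.cosh x ^ a := by
      rw [Real.rpow_sub hc, Real.rpow_one]
    have e2 : Real.cosh x ^ (1-a-1) = 1 / Real.cosh x ^ a := by
      rw [show (1:ℝ)-a-1 = -a by ring, Real.rpow_neg hc.le, one_div]
    have e3 : (1/Real.cosh x) ^ (a+1) = 1 / (Real.cosh x ^ a * Real.cosh x) := by
      rw [Real.div_rpow zero_le_one hc.le, Real.one_rpow, Real.rpow_add hc, Real.rpow_one]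
    have e4 : (1/Real.cosh x) ^ a = 1 / Real.cosh x ^ a := by
      rw [Real.div_rpow zero_le_one hc.le, Real.one_rpow]
    have e5 : Real.sinh x ^ 2 = Real.cosh x ^ 2 - 1 := Real.sinh_sq x
    rw [hF']
    dsimp only
    rw [Real.cosh_three_mul, Real.cosh_two_mul, e1, e2, e3, e4, e5]
    have e6 : Real.sinh x * Real.sinh x = Real.cosh x ^ 2 - 1 := by
      rw [← Real.sinh_sq x]; ring
    field_simp
    linear_combination (2*(1-a)) * e6
  have htend : Tendsto g atTop (𝓝 0) := by
    have hb : Tendsto (fun t : ℝ => 2 * Real.cosh t ^ (2-a)) atTop (𝓝 0) := by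
      have hcosh : Tendsto Real.cosh atTop atTop := by
        have h2 : Tendsto (fun t : ℝ => Real.exp t / 2) atTop atTop :=
          Real.tendsto_exp_atTop.atTop_div_const (by norm_num)
        apply tendsto_atTop_mono (fun t => ?_) h2
        have := exp_le_two_cosh t; linarith
      have := (tendsto_rpow_neg_atTop (y := a - 2) (by linarith)).comp hcosh
      have h0 : Tendsto (fun t : ℝ => Real.cosh t ^ (2-a)) atTop (𝓝 0) := by
        convert this using 2 with t
        rw [show (2:ℝ)-a = -(a-2) by ring]; rfl
      simpa using h0.const_mul (2:ℝ)
    apply squeeze_zero_norm' ?_ hb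
    filter_upwards [eventually_ge_atTop (0:ℝ)] with t ht
    have hc := Real.cosh_pos t
    have hsh : 0 ≤ Real.sinh t := Real.sinh_nonneg_iff.2 ht
    have h1 : Real.sinh t * Real.cosh t ^ (1-a) ≤ Real.cosh t * Real.cosh t ^ (1-a) := by
      exact mul_le_mul_of_nonneg_right (Real.sinh_lt_cosh t).le (Real.rpow_nonneg hc.le _)
    have h2 : Real.cosh t * Real.cosh t ^ (1-a) = Real.cosh t ^ (2-a) := by
      rw [show (2:ℝ)-a = 1+(1-a) by ring, Real.rpow_add hc, Real.rpow_one]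
    have hnn : (0:ℝ) ≤ Real.sinh t * Real.cosh t ^ (1-a) :=
      mul_nonneg (Real.sinh_nonneg_iff.2 ht) (Real.rpow_nonneg hc.le _)
    rw [hg]
    dsimp only
    rw [Real.norm_eq_abs, abs_mul, abs_of_nonneg hnn]
    rw [show |(-2:ℝ)| = 2 by norm_num]
    rw [← h2]
    linarith
  have hzero : ∫ x in Set.Ioi (0:ℝ), F' x = 0 := by
    rw [integral_Ioi_of_hasDerivAt_of_tendsto' hderiv hFint htend]
    simp [hg]
  rw [hF'] at hzero
  rw [integral_sub (hf3.const_mul a) (hf2.const_mul (a+2)), integral_const_mul,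
    integral_const_mul] at hzero
  linarith

lemma Jpos {a : ℝ} (ha : 2 < a) :
    0 < ∫ t in Set.Ioi (0:ℝ), Real.cosh (2*t) * (1/Real.cosh t) ^ a := by
  rw [setIntegral_pos_iff_support_of_nonneg_ae]
  · have hsupp : (Function.support fun t : ℝ => Real.cosh (2*t) * (1/Real.cosh t) ^ a)
        ∩ Set.Ioi 0 = Set.Ioi 0 := by
      apply Set.inter_eq_right.2
      intro t _
      have hc := Real.cosh_pos t
      have hc2 := Real.cosh_pos (2*t)
      have : (0:ℝ) < Real.cosh (2*t) * (1/Real.cosh t) ^ a := by positivity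
      exact Function.mem_support.2 this.ne'
    rw [hsupp, Real.volume_Ioi]
    norm_num
  · filter_upwards [ae_restrict_mem measurableSet_Ioi] with t _
    have hc := Real.cosh_pos t
    have hc2 := Real.cosh_pos (2*t)
    positivity
  · exact intA (by norm_num) (by linarith)

/-- For `a > 2`, the limiting (γ = 0) integrals are finite and their ratio is `a + 1`. -/
theorem limiting_ratio_eq_a_add_one (a : ℝ) (ha : 2 < a) :
    MeasureTheory.IntegrableOn
      (fun s : ℝ => (besselK 3 s - besselK 2 s / s) * s ^ a) (Set.Ioi 0) ∧
    MeasureTheory.IntegrableOn (fun s : ℝ => (besselK 2 s / s) * s ^ a) (Set.Ioi 0) ∧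
    (∫ s in Set.Ioi (0 : ℝ), (besselK 3 s - besselK 2 s / s) * s ^ a) /
      (∫ s in Set.Ioi (0 : ℝ), (besselK 2 s / s) * s ^ a) = a + 1 := by
  have ha0 : (0:ℝ) < a := by linarith
  obtain ⟨hI3int, hI3⟩ := besselK_moment 3 (b := a) ha0 (by push_cast; linarith)
  obtain ⟨hJint, hJ⟩ := besselK_moment 2 (b := a-1) (by linarith) (by push_cast; linarith)
  rw [show a-1+1 = a by ring] at hJ
  have hc3 : ((3:ℕ):ℝ) = (3:ℝ) := by norm_num
  have hc2 : ((2:ℕ):ℝ) = (2:ℝ) := by norm_num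
  rw [hc3] at hI3
  rw [hc2] at hJ
  set I3 := ∫ t in Set.Ioi (0:ℝ), Real.cosh (3*t) * (1/Real.cosh t) ^ (a+1) with hI3def
  set J := ∫ t in Set.Ioi (0:ℝ), Real.cosh (2*t) * (1/Real.cosh t) ^ a with hJdef
  have hkey : a * I3 = (a+2) * J := key_ident ha
  have hJpos : 0 < J := Jpos ha
  have hG : 0 < Real.Gamma a := Real.Gamma_pos_of_pos ha0
  have hGadd : Real.Gamma (a+1) = a * Real.Gamma a := Real.Gamma_add_one (by linarith)
  -- pointwise identities on Ioi 0
  have heq2 : ∀ s ∈ Set.Ioi (0:ℝ),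
      besselK 2 s * s ^ (a-1) = (besselK 2 s / s) * s ^ a := by
    intro s hs
    have hs0 : (0:ℝ) < s := hs
    rw [Real.rpow_sub_one hs0.ne']
    field_simp
  have heq1 : ∀ s ∈ Set.Ioi (0:ℝ),
      besselK 3 s * s ^ a - besselK 2 s * s ^ (a-1)
        = (besselK 3 s - besselK 2 s / s) * s ^ a := by
    intro s hs
    rw [heq2 s hs]
    ring
  refine ⟨?_, ?_, ?_⟩
  · apply IntegrableOn.congr_fun (hI3int.sub hJint) ?_ measurableSet_Ioi
    intro s hs
    simpa using heq1 s hs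
  · exact IntegrableOn.congr_fun hJint heq2 measurableSet_Ioi
  · have hNval : ∫ s in Set.Ioi (0:ℝ), (besselK 3 s - besselK 2 s / s) * s ^ a
        = Real.Gamma (a+1) * I3 - Real.Gamma a * J := by
      rw [← setIntegral_congr_fun measurableSet_Ioi heq1,
        integral_sub hI3int hJint, hI3, hJ]
    have hDval : ∫ s in Set.Ioi (0:ℝ), (besselK 2 s / s) * s ^ a
        = Real.Gamma a * J := by
      rw [← setIntegral_congr_fun measurableSet_Ioi heq2, hJ]
    rw [hNval, hDval]
    have hN : Real.Gamma (a+1) * I3 - Real.Gamma a * J = (a+1) * (Real.Gamma a * J) := by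
      rw [hGadd]
      have : a * Real.Gamma a * I3 = Real.Gamma a * (a * I3) := by ring
      rw [this, hkey]
      ring
    rw [hN]
    field_simp
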